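/- Let γ_b and γ_e be independent random variables with γ_b exponentially distributed with mean γ̄_b > 0 and γ_e exponentially distributed with mean γ̄_e > 0 (Rayleigh fading SNRs). Then for every R_s ≥ 0, P(γ_b < 2^{R_s} γ_e + 2^{R_s} − 1) > 0; that is, the outage probability of secrecy capacity is strictly positive and perfect secrecy cannot be achieved, regardless of the values of γ̄_b, γ̄_e and R_s. -/

import Mathlib

open MeasureTheory ProbabilityTheory Real Set

lemma expMeasure_Iic {r : ℝ} (hr : 0 < r) (x : ℝ) (hx : 0 ≤ x) :
    ProbabilityTheory.expMeasure r (Iic x) = ENNReal.ofReal (1 - Real.exp (-(r * x))) := by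
  have := ProbabilityTheory.isProbabilityMeasure_expMeasure hr
  rw [← ofReal_cdf (expMeasure r) x]
  have h : cdf (expMeasure r) x = if 0 ≤ x then 1 - exp (-(r * x)) else 0 := cdf_expMeasure_eq hr x
  rw [h, if_pos hx]

lemma expMeasure_Iic_pos {r : ℝ} (hr : 0 < r) {x : ℝ} (hx : 0 < x) :
    0 < ProbabilityTheory.expMeasure r (Iic x) := by
  rw [expMeasure_Iic hr x hx.le]
  rw [ENNReal.ofReal_pos]
  have : Real.exp (-(r * x)) < 1 := by
    rw [Real.exp_lt_one_iff]
    nlinarith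
  linarith

lemma expMeasure_Ici_pos_aux {r : ℝ} (hr : 0 < r) {x : ℝ} (hx : 0 < x) :
    0 < ProbabilityTheory.expMeasure r (Ici x) := by
  have := ProbabilityTheory.isProbabilityMeasure_expMeasure hr
  have hcompl : Ici x = (Iio x)ᶜ := by simp
  rw [hcompl, measure_compl measurableSet_Iio (measure_ne_top _ _)]
  have h1 : ProbabilityTheory.expMeasure r (Iio x) ≤
        ProbabilityTheory.expMeasure r (Iic x) := measure_mono Iio_subset_Iic_self
  have h2 : ProbabilityTheory.expMeasure r (Iic x)
        = ENNReal.ofReal (1 - Real.exp (-(r * x))) := expMeasure_Iic hr x hx.le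
  have h3 : ProbabilityTheory.expMeasure r (Iic x) < 1 := by
    rw [h2]
    have : (0:ℝ) < Real.exp (-(r * x)) := Real.exp_pos _
    calc ENNReal.ofReal (1 - Real.exp (-(r * x))) < ENNReal.ofReal 1 := by
          rw [ENNReal.ofReal_lt_ofReal_iff one_pos]; linarith
      _ = 1 := ENNReal.ofReal_one
  have hlt : ProbabilityTheory.expMeasure r (Iio x) < 1 := lt_of_le_of_lt h1 h3
  rw [measure_univ]
  exact tsub_pos_of_lt hlt

lemma expMeasure_Ici_pos {r : ℝ} (hr : 0 < r) (x : ℝ) :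
    0 < ProbabilityTheory.expMeasure r (Ici x) := by
  refine lt_of_lt_of_le (expMeasure_Ici_pos_aux hr (x := max x 1) (by positivity)) ?_
  exact measure_mono (Ici_subset_Ici.mpr (le_max_left x 1))

theorem rayleigh_no_perfect_secrecy {Ω : Type*} [MeasurableSpace Ω] (μ : Measure Ω)
    [IsProbabilityMeasure μ] (γb γe : Ω → ℝ)
    (hb : Measurable γb) (he : Measurable γe)
    (hindep : IndepFun γb γe μ)
    (γbar_b γbar_e : ℝ) (hγb : 0 < γbar_b) (hγe : 0 < γbar_e)
    (hlawb : Measure.map γb μ = ProbabilityTheory.expMeasure γbar_b⁻¹)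
    (hlawe : Measure.map γe μ = ProbabilityTheory.expMeasure γbar_e⁻¹)
    (Rs : ℝ) (hRs : 0 ≤ Rs) :
    0 < μ {ω | γb ω < 2 ^ Rs * γe ω + 2 ^ Rs - 1} := by
  have hc : (1:ℝ) ≤ 2 ^ Rs := by
    calc (1:ℝ) = (2:ℝ) ^ (0:ℝ) := by rw [Real.rpow_zero]
      _ ≤ 2 ^ Rs := Real.rpow_le_rpow_of_exponent_le one_le_two hRs
  have hsub : γb ⁻¹' (Iio 1) ∩ γe ⁻¹' (Ici 1) ⊆
      {ω | γb ω < 2 ^ Rs * γe ω + 2 ^ Rs - 1} := by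
    rintro ω ⟨h1, h2⟩
    simp only [mem_preimage, mem_Iio, mem_Ici] at h1 h2
    simp only [mem_setOf_eq]
    nlinarith
  have hmul : μ (γb ⁻¹' (Iio 1) ∩ γe ⁻¹' (Ici 1))
      = μ (γb ⁻¹' (Iio 1)) * μ (γe ⁻¹' (Ici 1)) :=
    hindep.measure_inter_preimage_eq_mul _ _ measurableSet_Iio measurableSet_Ici
  have hbpos : 0 < μ (γb ⁻¹' (Iio 1)) := by
    have : μ (γb ⁻¹' (Iio 1)) = ProbabilityTheory.expMeasure γbar_b⁻¹ (Iio 1) := by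
      rw [← hlawb, Measure.map_apply hb measurableSet_Iio]
    rw [this]
    refine lt_of_lt_of_le (expMeasure_Iic_pos (inv_pos.mpr hγb) (x := 1/2) (by norm_num)) ?_
    exact measure_mono (fun y (hy : y ∈ Iic (1/2:ℝ)) => show y < 1 by simp only [mem_Iic] at hy; linarith)
  have hepos : 0 < μ (γe ⁻¹' (Ici 1)) := by
    have : μ (γe ⁻¹' (Ici 1)) = ProbabilityTheory.expMeasure γbar_e⁻¹ (Ici 1) := by
      rw [← hlawe, Measure.map_apply he measurableSet_Ici]
    rw [this]
    exact expMeasure_Ici_pos (inv_pos.mpr hγe) 1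
  calc 0 < μ (γb ⁻¹' (Iio 1)) * μ (γe ⁻¹' (Ici 1)) := ENNReal.mul_pos hbpos.ne' hepos.ne'
    _ = μ (γb ⁻¹' (Iio 1) ∩ γe ⁻¹' (Ici 1)) := hmul.symm
    _ ≤ _ := measure_mono hsub
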